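/- In Setting (B) with homoskedastic errors σ²_{i,j} = σ² > 0 for all i, j, suppose the deterministic weights v_j, w_j (j = 2,...,J−1) are nonnegative with Σ_j v_j = Σ_j w_j = 1, w_j > 0 for all j, v_j ≤ 2·w_j for all j, and that τ² is such that Var(β̂^NPWP) = Var(β̂^CO). Then the ensemble estimator β̂^ENS = (1/2)·β̂^NPWP + (1/2)·β̂^CO satisfies Var(β̂^ENS) < Var(β̂^NPWP) = Var(β̂^CO), i.e. the ensemble estimator has strictly smaller variance than either single estimator. -/

import Mathlib

open MeasureTheory ProbabilityTheory Finset

/-- The covariance of two real random variables (with respect to the ambient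
probability measure of a `MeasureSpace`). -/
noncomputable def covar {Ω : Type*} [MeasureSpace Ω] (f g : Ω → ℝ) : ℝ :=
  ∫ ω, (f ω - ∫ x, f x) * (g ω - ∫ x, g x)

/- ### Auxiliary machinery -/

/-- within-period contrast coefficients -/
noncomputable def cA (J i j : ℕ) : ℝ :=
  if i < j then ((j : ℝ) - 1)⁻¹ else -(((J : ℝ) - (j : ℝ))⁻¹)

/-- crossover contrast coefficients -/
noncomputable def cB (J i j k : ℕ) : ℝ :=
  if j = k then (if i = k - 1 then 1 else if k ≤ i then -(((J : ℝ) - (k : ℝ))⁻¹) else 0)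
  else if j = k - 1 then
    (if i = k - 1 then -1 else if k ≤ i then ((J : ℝ) - (k : ℝ))⁻¹ else 0)
  else 0

lemma hfilter_le (J k : ℕ) (hk : 1 ≤ k) (f : ℕ → ℝ) :
    ∑ i ∈ Icc 1 (J - 1), (if k ≤ i then f i else 0) = ∑ i ∈ Icc k (J - 1), f i := by
  rw [← Finset.sum_filter]
  congr 1
  ext i
  simp only [Finset.mem_filter, Finset.mem_Icc]
  omega

/-- index predicate for the independent family -/
def Pred (J : ℕ) (x : ℕ ⊕ ℕ × ℕ) : Prop :=
  (∀ i, x = Sum.inl i → i ∈ Icc 1 (J - 1)) ∧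
    (∀ i j, x = Sum.inr (i, j) → i ∈ Icc 1 (J - 1) ∧ j ∈ Icc 1 J)

/-- index Finset for the independent family -/
def Sfin (J : ℕ) : Finset (ℕ ⊕ ℕ × ℕ) :=
  (Icc 1 (J - 1)).image Sum.inl ∪ ((Icc 1 (J - 1)) ×ˢ (Icc 1 J)).image Sum.inr

lemma mem_Sfin_iff (J : ℕ) (x : ℕ ⊕ ℕ × ℕ) : x ∈ Sfin J ↔ Pred J x := by
  rcases x with i | ⟨i, j⟩ <;> simp [Sfin, Pred, Finset.mem_product]

lemma sum_Sfin (J : ℕ) (f : ℕ ⊕ ℕ × ℕ → ℝ) :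
    ∑ x ∈ Sfin J, f x = (∑ i ∈ Icc 1 (J - 1), f (Sum.inl i)) +
      ∑ q ∈ (Icc 1 (J - 1)) ×ˢ (Icc 1 J), f (Sum.inr q) := by
  rw [Sfin, Finset.sum_union, Finset.sum_image (by simp), Finset.sum_image (by simp)]
  simp [Finset.disjoint_left]

section Aux
variable {Ω : Type*} [MeasureSpace Ω] [IsProbabilityMeasure (ℙ : Measure Ω)]

lemma var_const_add (k : ℝ) (f : Ω → ℝ) (hf : Integrable f ℙ) :
    variance (fun ω => k + f ω) ℙ = variance f ℙ := by
  have h : (∫ ω, (k + f ω) ∂ℙ) = k + ∫ ω, f ω ∂ℙ := by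
    rw [integral_add (integrable_const k) hf, integral_const]
    simp
  simp only [variance, evariance]
  congr 1
  refine lintegral_congr fun ω => ?_
  congr 2
  rw [h]; ring

/-- The variance of a linear combination of the independent family. -/
lemma key_var (J : ℕ) (α : ℕ → Ω → ℝ) (ε : ℕ → ℕ → Ω → ℝ)
    (hindep : iIndepFun
      (fun x : {x : ℕ ⊕ ℕ × ℕ // (∀ i, x = Sum.inl i → i ∈ Icc 1 (J - 1)) ∧
          (∀ i j, x = Sum.inr (i, j) → i ∈ Icc 1 (J - 1) ∧ j ∈ Icc 1 J)} =>
        Sum.elim α (fun q => ε q.1 q.2) x.1) ℙ)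
    (hL2α : ∀ i ∈ Icc 1 (J - 1), MemLp (α i) 2 ℙ)
    (hL2ε : ∀ i ∈ Icc 1 (J - 1), ∀ j ∈ Icc 1 J, MemLp (ε i j) 2 ℙ)
    (c : ℕ ⊕ ℕ × ℕ → ℝ) (k : ℝ) :
    variance (fun ω => k + ∑ x ∈ Sfin J, c x * Sum.elim α (fun q => ε q.1 q.2) x ω) ℙ
      = ∑ x ∈ Sfin J, (c x) ^ 2 * variance (Sum.elim α (fun q => ε q.1 q.2) x) ℙ := by
  set Z : ℕ ⊕ ℕ × ℕ → Ω → ℝ := Sum.elim α (fun q => ε q.1 q.2) with hZ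
  have hL2Z : ∀ x ∈ Sfin J, MemLp (Z x) 2 ℙ := by
    rintro (i | ⟨i, j⟩) hx
    · rw [mem_Sfin_iff] at hx
      exact hL2α i (hx.1 i rfl)
    · rw [mem_Sfin_iff] at hx
      obtain ⟨h1, h2⟩ := hx.2 i j rfl
      exact hL2ε i h1 j h2
  have hL2cZ : ∀ x ∈ Sfin J, MemLp (fun ω => c x * Z x ω) 2 ℙ :=
    fun x hx => (hL2Z x hx).const_mul (c x)
  haveI F : Fintype (Subtype (Pred J)) := Fintype.subtype (Sfin J) (mem_Sfin_iff J)
  have h1 : (fun ω => ∑ x ∈ Sfin J, c x * Z x ω)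
      = ∑ t : Subtype (Pred J), (fun ω => c t.1 * Z t.1 ω) := by
    funext ω
    rw [Finset.sum_apply]
    exact Finset.sum_subtype (Sfin J) (mem_Sfin_iff J) (fun x => c x * Z x ω)
  rw [var_const_add _ _ ((memLp_finset_sum' _ hL2cZ).integrable one_le_two |>.congr
      (by filter_upwards with ω; rw [Finset.sum_apply]))]
  rw [h1, IndepFun.variance_sum (fun t _ => by
      have := hL2cZ t.1 ((mem_Sfin_iff J t.1).mpr t.2); exact this)
    (fun t _ t' _ htt' => by
      have hi : IndepFun (Z t.1) (Z t'.1) ℙ := hindep.indepFun htt'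
      exact hi.comp (measurable_const_mul (c t.1)) (measurable_const_mul (c t'.1)))]
  rw [Finset.sum_subtype (Sfin J) (mem_Sfin_iff J)
    (fun x => (c x) ^ 2 * variance (Z x) ℙ)]
  exact Finset.sum_congr rfl fun t _ => variance_const_mul (c t.1) (Z t.1) ℙ
end Aux

section Model
variable {Ω : Type*} [MeasureSpace Ω]

set_option linter.unusedSectionVars false in
lemma Bk_dec (J : ℕ) (hJ : 3 ≤ J) (μc β : ℝ) (θ : ℕ → ℝ)
    (α : ℕ → Ω → ℝ) (ε : ℕ → ℕ → Ω → ℝ) (Y : ℕ → ℕ → Ω → ℝ)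
    (hY : ∀ i j ω, Y i j ω = μc + α i ω + θ j + (if i < j then β else 0) + ε i j ω)
    (B : ℕ → Ω → ℝ)
    (hB : ∀ j ω, B j ω = Y (j - 1) j ω - Y (j - 1) (j - 1) ω
        - ((J : ℝ) - (j : ℝ))⁻¹ * ∑ l ∈ Icc j (J - 1), (Y l j ω - Y l (j - 1) ω))
    (k : ℕ) (hk : k ∈ Icc 2 (J - 1)) (ω : Ω) :
    B k ω = β + ∑ q ∈ (Icc 1 (J - 1)) ×ˢ (Icc 1 J), cB J q.1 q.2 k * ε q.1 q.2 ω := by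
  rw [Finset.mem_Icc] at hk
  obtain ⟨hk2, hkJ⟩ := hk
  have hkJ' : k < J := by omega
  have hJk : (0:ℝ) < (J : ℝ) - (k : ℝ) := by
    have : (k : ℝ) < (J : ℝ) := by exact_mod_cast hkJ'
    linarith
  have hr : ((J : ℝ) - (k : ℝ))⁻¹ * ((J : ℝ) - (k : ℝ)) = 1 := inv_mul_cancel₀ (ne_of_gt hJk)
  have hcard : (Icc k (J - 1)).card = J - k := by rw [Nat.card_Icc]; omega
  have hcast : ((J - k : ℕ) : ℝ) = (J : ℝ) - (k : ℝ) := by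
    push_cast [Nat.cast_sub hkJ'.le]; ring
  have hne : ¬ ((k : ℕ) = k - 1) := by omega
  have hne' : ¬ (k - 1 = k) := by omega
  have hle : ¬ (k ≤ k - 1) := by omega
  have hL : B k ω = β + (ε (k - 1) k ω - ε (k - 1) (k - 1) ω
      - ((J : ℝ) - (k : ℝ))⁻¹ * ∑ l ∈ Icc k (J - 1), (ε l k ω - ε l (k - 1) ω)) := by
    have hsum1 : ∑ l ∈ Icc k (J - 1), (Y l k ω - Y l (k - 1) ω)
        = ∑ l ∈ Icc k (J - 1), ((θ k - θ (k - 1)) + (ε l k ω - ε l (k - 1) ω)) := by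
      refine Finset.sum_congr rfl fun l hl => ?_
      rw [Finset.mem_Icc] at hl
      rw [hY, hY, if_neg (by omega : ¬ l < k), if_neg (by omega : ¬ l < k - 1)]
      ring
    rw [hB, hY, hY, if_pos (by omega : k - 1 < k), if_neg (by omega : ¬ (k - 1 < k - 1)),
      hsum1, Finset.sum_add_distrib, Finset.sum_const, hcard, nsmul_eq_mul, hcast]
    linear_combination (θ (k - 1) - θ k) * hr
  have hR : ∑ q ∈ (Icc 1 (J - 1)) ×ˢ (Icc 1 J), cB J q.1 q.2 k * ε q.1 q.2 ω
      = ε (k - 1) k ω - ε (k - 1) (k - 1) ω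
        - ((J : ℝ) - (k : ℝ))⁻¹ * ∑ l ∈ Icc k (J - 1), (ε l k ω - ε l (k - 1) ω) := by
    rw [Finset.sum_product]
    have inner : ∀ i ∈ Icc 1 (J - 1), ∑ j ∈ Icc 1 J, cB J i j k * ε i j ω
        = (if i = k - 1 then ε i k ω else 0)
          + (if k ≤ i then -((J : ℝ) - (k : ℝ))⁻¹ * ε i k ω else 0)
          + ((if i = k - 1 then -(ε i (k - 1) ω) else 0)
            + (if k ≤ i then ((J : ℝ) - (k : ℝ))⁻¹ * ε i (k - 1) ω else 0)) := by
      intro i _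
      have hsplit : ∀ j ∈ Icc 1 J, cB J i j k * ε i j ω =
          (if j = k then ((if i = k - 1 then ε i k ω else 0)
              + (if k ≤ i then -((J : ℝ) - (k : ℝ))⁻¹ * ε i k ω else 0)) else 0)
          + (if j = k - 1 then ((if i = k - 1 then -(ε i (k - 1) ω) else 0)
              + (if k ≤ i then ((J : ℝ) - (k : ℝ))⁻¹ * ε i (k - 1) ω else 0)) else 0) := by
        intro j _
        by_cases h1 : j = k
        · have h2 : ¬ j = k - 1 := by omega
          by_cases h3 : i = k - 1
          · have h4 : ¬ k ≤ i := by omega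
            simp [cB, h1, h2, h3, h4, hne, hne', hle]
          · by_cases h4 : k ≤ i <;> simp [cB, h1, h2, h3, h4, hne, hne', hle]
        · by_cases h2 : j = k - 1
          · by_cases h3 : i = k - 1
            · have h4 : ¬ k ≤ i := by omega
              simp [cB, h1, h2, h3, h4, hne, hne', hle]
            · by_cases h4 : k ≤ i <;> simp [cB, h1, h2, h3, h4, hne, hne', hle]
          · simp [cB, h1, h2]
      rw [Finset.sum_congr rfl hsplit, Finset.sum_add_distrib,
        Finset.sum_ite_eq' (Icc 1 J) k, Finset.sum_ite_eq' (Icc 1 J) (k - 1),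
        if_pos (by simp only [Finset.mem_Icc]; omega : k ∈ Icc 1 J),
        if_pos (by simp only [Finset.mem_Icc]; omega : k - 1 ∈ Icc 1 J)]
    rw [Finset.sum_congr rfl inner]
    rw [Finset.sum_add_distrib, Finset.sum_add_distrib, Finset.sum_add_distrib]
    rw [Finset.sum_ite_eq' (Icc 1 (J - 1)) (k - 1) (fun i => ε i k ω),
      Finset.sum_ite_eq' (Icc 1 (J - 1)) (k - 1) (fun i => -(ε i (k - 1) ω)),
      if_pos (by simp only [Finset.mem_Icc]; omega : k - 1 ∈ Icc 1 (J - 1)),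
      if_pos (by simp only [Finset.mem_Icc]; omega : k - 1 ∈ Icc 1 (J - 1)),
      hfilter_le J k (by omega), hfilter_le J k (by omega)]
    rw [Finset.sum_sub_distrib, ← Finset.mul_sum, ← Finset.mul_sum]
    ring
  rw [hL, hR]

set_option linter.unusedSectionVars false in
lemma Aj_dec (J : ℕ) (hJ : 3 ≤ J) (μc β : ℝ) (θ : ℕ → ℝ)
    (α : ℕ → Ω → ℝ) (ε : ℕ → ℕ → Ω → ℝ) (Y : ℕ → ℕ → Ω → ℝ)
    (hY : ∀ i j ω, Y i j ω = μc + α i ω + θ j + (if i < j then β else 0) + ε i j ω)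
    (A : ℕ → Ω → ℝ)
    (hA : ∀ j ω, A j ω = ((j : ℝ) - 1)⁻¹ * ∑ i ∈ Icc 1 (j - 1), Y i j ω
        - ((J : ℝ) - (j : ℝ))⁻¹ * ∑ i ∈ Icc j (J - 1), Y i j ω)
    (j : ℕ) (hj : j ∈ Icc 2 (J - 1)) (ω : Ω) :
    A j ω = β + ∑ i ∈ Icc 1 (J - 1), cA J i j * (α i ω + ε i j ω) := by
  rw [Finset.mem_Icc] at hj
  obtain ⟨hj2, hjJ⟩ := hj
  have hjJ' : j < J := by omega
  have hj1 : (1:ℝ) ≤ (j : ℝ) - 1 := by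
    have : (2:ℝ) ≤ (j : ℝ) := by exact_mod_cast hj2
    linarith
  have hr1 : ((j : ℝ) - 1)⁻¹ * ((j : ℝ) - 1) = 1 := inv_mul_cancel₀ (by linarith)
  have hJj : (0:ℝ) < (J : ℝ) - (j : ℝ) := by
    have : (j : ℝ) < (J : ℝ) := by exact_mod_cast hjJ'
    linarith
  have hr2 : ((J : ℝ) - (j : ℝ))⁻¹ * ((J : ℝ) - (j : ℝ)) = 1 := inv_mul_cancel₀ (ne_of_gt hJj)
  have hcard1 : (Icc 1 (j - 1)).card = j - 1 := by rw [Nat.card_Icc]; omega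
  have hcard2 : (Icc j (J - 1)).card = J - j := by rw [Nat.card_Icc]; omega
  have hcast1 : ((j - 1 : ℕ) : ℝ) = (j : ℝ) - 1 := by
    push_cast [Nat.cast_sub (by omega : 1 ≤ j)]; ring
  have hcast2 : ((J - j : ℕ) : ℝ) = (J : ℝ) - (j : ℝ) := by
    push_cast [Nat.cast_sub hjJ'.le]; ring
  have hsum1 : ∑ i ∈ Icc 1 (j - 1), Y i j ω
      = ((j : ℝ) - 1) * (μc + θ j + β) + ∑ i ∈ Icc 1 (j - 1), (α i ω + ε i j ω) := by
    rw [show ∑ i ∈ Icc 1 (j - 1), Y i j ω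
        = ∑ i ∈ Icc 1 (j - 1), ((μc + θ j + β) + (α i ω + ε i j ω)) from
      Finset.sum_congr rfl fun i hi => by
        rw [Finset.mem_Icc] at hi
        rw [hY, if_pos (by omega : i < j)]; ring]
    rw [Finset.sum_add_distrib, Finset.sum_const, hcard1, nsmul_eq_mul, hcast1]
  have hsum2 : ∑ i ∈ Icc j (J - 1), Y i j ω
      = ((J : ℝ) - (j : ℝ)) * (μc + θ j) + ∑ i ∈ Icc j (J - 1), (α i ω + ε i j ω) := by
    rw [show ∑ i ∈ Icc j (J - 1), Y i j ω
        = ∑ i ∈ Icc j (J - 1), ((μc + θ j) + (α i ω + ε i j ω)) from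
      Finset.sum_congr rfl fun i hi => by
        rw [Finset.mem_Icc] at hi
        rw [hY, if_neg (by omega : ¬ i < j)]; ring]
    rw [Finset.sum_add_distrib, Finset.sum_const, hcard2, nsmul_eq_mul, hcast2]
  have hR : ∑ i ∈ Icc 1 (J - 1), cA J i j * (α i ω + ε i j ω)
      = ((j : ℝ) - 1)⁻¹ * (∑ i ∈ Icc 1 (j - 1), (α i ω + ε i j ω))
        - ((J : ℝ) - (j : ℝ))⁻¹ * (∑ i ∈ Icc j (J - 1), (α i ω + ε i j ω)) := by
    have e1 : Icc 1 (J - 1) = Ico 1 J := by ext x; simp only [mem_Icc, mem_Ico]; omega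
    have e2 : Icc 1 (j - 1) = Ico 1 j := by ext x; simp only [mem_Icc, mem_Ico]; omega
    have e3 : Icc j (J - 1) = Ico j J := by ext x; simp only [mem_Icc, mem_Ico]; omega
    rw [e1, e2, e3, ← Finset.sum_Ico_consecutive _ (by omega : 1 ≤ j) (by omega : j ≤ J)]
    have c1 : ∑ i ∈ Ico 1 j, cA J i j * (α i ω + ε i j ω)
        = ∑ i ∈ Ico 1 j, ((j : ℝ) - 1)⁻¹ * (α i ω + ε i j ω) := by
      refine Finset.sum_congr rfl fun i hi => ?_
      rw [Finset.mem_Ico] at hi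
      rw [cA, if_pos hi.2]
    have c2 : ∑ i ∈ Ico j J, cA J i j * (α i ω + ε i j ω)
        = ∑ i ∈ Ico j J, -(((J : ℝ) - (j : ℝ))⁻¹) * (α i ω + ε i j ω) := by
      refine Finset.sum_congr rfl fun i hi => ?_
      rw [Finset.mem_Ico] at hi
      rw [cA, if_neg (by omega : ¬ i < j)]
    rw [c1, c2, ← Finset.mul_sum, ← Finset.mul_sum]
    ring
  rw [hA, hsum1, hsum2, hR]
  linear_combination (μc + θ j + β) * hr1 - (μc + θ j) * hr2
end Model
theorem stmt_19
    {Ω : Type*} [MeasureSpace Ω] [IsProbabilityMeasure (ℙ : Measure Ω)]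
    (J : ℕ) (hJ : 3 ≤ J)
    (μc β τsq : ℝ) (θ : ℕ → ℝ) (σsq : ℕ → ℕ → ℝ)
    (α : ℕ → Ω → ℝ) (ε : ℕ → ℕ → Ω → ℝ)
    (hmα : ∀ i, Measurable (α i)) (hmε : ∀ i j, Measurable (ε i j))
    -- the random variables {α_i} ∪ {ε_{i,j}} are mutually independent
    (hindep : iIndepFun
      (fun x : {x : ℕ ⊕ ℕ × ℕ // (∀ i, x = Sum.inl i → i ∈ Icc 1 (J - 1)) ∧
          (∀ i j, x = Sum.inr (i, j) → i ∈ Icc 1 (J - 1) ∧ j ∈ Icc 1 J)} =>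
        Sum.elim α (fun q => ε q.1 q.2) x.1) ℙ)
    -- moment assumptions
    (hEα : ∀ i ∈ Icc 1 (J - 1), ∫ ω, α i ω ∂ℙ = 0)
    (hVα : ∀ i ∈ Icc 1 (J - 1), variance (α i) ℙ = τsq)
    (hL2α : ∀ i ∈ Icc 1 (J - 1), MemLp (α i) 2 ℙ)
    (hEε : ∀ i ∈ Icc 1 (J - 1), ∀ j ∈ Icc 1 J, ∫ ω, ε i j ω ∂ℙ = 0)
    (hVε : ∀ i ∈ Icc 1 (J - 1), ∀ j ∈ Icc 1 J, variance (ε i j) ℙ = σsq i j)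
    (hL2ε : ∀ i ∈ Icc 1 (J - 1), ∀ j ∈ Icc 1 J, MemLp (ε i j) 2 ℙ)
    -- the mixed effects model: cluster i is on intervention in periods j > i
    (Y : ℕ → ℕ → Ω → ℝ)
    (hY : ∀ i j ω, Y i j ω = μc + α i ω + θ j + (if i < j then β else 0) + ε i j ω)
    -- the within-period contrast A_j
    (A : ℕ → Ω → ℝ)
    (hA : ∀ j ω, A j ω = ((j : ℝ) - 1)⁻¹ * ∑ i ∈ Icc 1 (j - 1), Y i j ω
        - ((J : ℝ) - (j : ℝ))⁻¹ * ∑ i ∈ Icc j (J - 1), Y i j ω)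
    -- the crossover contrast B_j
    (B : ℕ → Ω → ℝ)
    (hB : ∀ j ω, B j ω = Y (j - 1) j ω - Y (j - 1) (j - 1) ω
        - ((J : ℝ) - (j : ℝ))⁻¹ * ∑ l ∈ Icc j (J - 1), (Y l j ω - Y l (j - 1) ω))
    -- the non-parametric within-period estimator with deterministic weights v
    (v : ℕ → ℝ) (βNPWP : Ω → ℝ)
    (hNPWP : ∀ ω, βNPWP ω = ∑ j ∈ Icc 2 (J - 1), v j * A j ω)
    -- the crossover estimator with deterministic weights w
    (w : ℕ → ℝ) (βCO : Ω → ℝ)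
    (hCO : ∀ ω, βCO ω = ∑ j ∈ Icc 2 (J - 1), w j * B j ω)
    -- homoskedastic errors
    (σ2 : ℝ) (hσ : ∀ i ∈ Icc 1 (J - 1), ∀ j ∈ Icc 1 J, σsq i j = σ2)
    -- weight assumptions
    (hσ2pos : 0 < σ2)
    (hv0 : ∀ j ∈ Icc 2 (J - 1), 0 ≤ v j) (hw0 : ∀ j ∈ Icc 2 (J - 1), 0 < w j)
    (hvsum : ∑ j ∈ Icc 2 (J - 1), v j = 1) (hwsum : ∑ j ∈ Icc 2 (J - 1), w j = 1)
    (hvw : ∀ j ∈ Icc 2 (J - 1), v j ≤ 2 * w j)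
    -- equal variances and the ensemble estimator
    (hvar : variance βNPWP ℙ = variance βCO ℙ)
    (βENS : Ω → ℝ) (hENS : ∀ ω, βENS ω = (1 / 2) * βNPWP ω + (1 / 2) * βCO ω)
    :
    variance βENS ℙ < variance βNPWP ℙ ∧ variance βENS ℙ < variance βCO ℙ := by
  classical
  -- coefficient functions
  set a : ℕ ⊕ ℕ × ℕ → ℝ := Sum.elim (fun i => ∑ j ∈ Icc 2 (J - 1), v j * cA J i j)
    (fun q => if q.2 ∈ Icc 2 (J - 1) then v q.2 * cA J q.1 q.2 else 0) with hadef
  set b : ℕ ⊕ ℕ × ℕ → ℝ := Sum.elim (fun _ => 0)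
    (fun q => ∑ k ∈ Icc 2 (J - 1), w k * cB J q.1 q.2 k) with hbdef
  set Zf : ℕ ⊕ ℕ × ℕ → Ω → ℝ := Sum.elim α (fun q => ε q.1 q.2) with hZdef
  -- CO decomposition
  have hCOdec : ∀ ω, βCO ω = β + ∑ x ∈ Sfin J, b x * Zf x ω := by
    intro ω
    rw [hCO, sum_Sfin]
    have hz : ∑ i ∈ Icc 1 (J - 1), b (Sum.inl i) * Zf (Sum.inl i) ω = 0 := by
      simp [hbdef, hZdef]
    rw [hz]
    have h1 : ∀ k ∈ Icc 2 (J - 1), w k * B k ω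
        = w k * β + ∑ q ∈ (Icc 1 (J - 1)) ×ˢ (Icc 1 J), w k * (cB J q.1 q.2 k * ε q.1 q.2 ω) :=
      fun k hk => by
        rw [Bk_dec J hJ μc β θ α ε Y hY B hB k hk ω, mul_add, Finset.mul_sum]
    rw [Finset.sum_congr rfl h1, Finset.sum_add_distrib, ← Finset.sum_mul, hwsum, one_mul,
      Finset.sum_comm]
    rw [show ∑ q ∈ (Icc 1 (J - 1)) ×ˢ (Icc 1 J), ∑ k ∈ Icc 2 (J - 1),
        w k * (cB J q.1 q.2 k * ε q.1 q.2 ω)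
        = ∑ q ∈ (Icc 1 (J - 1)) ×ˢ (Icc 1 J), b (Sum.inr q) * Zf (Sum.inr q) ω from
      Finset.sum_congr rfl fun q _ => by
        simp only [hbdef, hZdef, Sum.elim_inr, Finset.sum_mul]
        exact Finset.sum_congr rfl fun k _ => by ring]
    ring
  -- NPWP decomposition
  have hNdec : ∀ ω, βNPWP ω = β + ∑ x ∈ Sfin J, a x * Zf x ω := by
    intro ω
    rw [hNPWP, sum_Sfin]
    have h2 : ∑ q ∈ (Icc 1 (J - 1)) ×ˢ (Icc 1 J), a (Sum.inr q) * Zf (Sum.inr q) ω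
        = ∑ i ∈ Icc 1 (J - 1), ∑ j ∈ Icc 2 (J - 1), v j * cA J i j * ε i j ω := by
      rw [Finset.sum_product]
      refine Finset.sum_congr rfl fun i _ => ?_
      simp only [hadef, hZdef, Sum.elim_inr, ite_mul, zero_mul]
      rw [Finset.sum_ite_mem, Finset.inter_eq_right.mpr
        (Finset.Icc_subset_Icc (by omega) (by omega))]
    have h1 : ∑ i ∈ Icc 1 (J - 1), a (Sum.inl i) * Zf (Sum.inl i) ω
        = ∑ i ∈ Icc 1 (J - 1), ∑ j ∈ Icc 2 (J - 1), v j * cA J i j * α i ω := by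
      refine Finset.sum_congr rfl fun i _ => ?_
      simp only [hadef, hZdef, Sum.elim_inl, Finset.sum_mul]
    rw [h1, h2, ← Finset.sum_add_distrib]
    have h3 : ∑ i ∈ Icc 1 (J - 1), (∑ j ∈ Icc 2 (J - 1), v j * cA J i j * α i ω
          + ∑ j ∈ Icc 2 (J - 1), v j * cA J i j * ε i j ω)
        = ∑ j ∈ Icc 2 (J - 1), v j * ∑ i ∈ Icc 1 (J - 1), cA J i j * (α i ω + ε i j ω) := by
      calc ∑ i ∈ Icc 1 (J - 1), (∑ j ∈ Icc 2 (J - 1), v j * cA J i j * α i ω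
            + ∑ j ∈ Icc 2 (J - 1), v j * cA J i j * ε i j ω)
          = ∑ i ∈ Icc 1 (J - 1), ∑ j ∈ Icc 2 (J - 1),
              (v j * cA J i j * α i ω + v j * cA J i j * ε i j ω) :=
            Finset.sum_congr rfl fun i _ => (Finset.sum_add_distrib).symm
        _ = ∑ j ∈ Icc 2 (J - 1), ∑ i ∈ Icc 1 (J - 1),
              (v j * cA J i j * α i ω + v j * cA J i j * ε i j ω) := Finset.sum_comm
        _ = ∑ j ∈ Icc 2 (J - 1), v j * ∑ i ∈ Icc 1 (J - 1), cA J i j * (α i ω + ε i j ω) := by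
            refine Finset.sum_congr rfl fun j _ => ?_
            rw [Finset.mul_sum]
            exact Finset.sum_congr rfl fun i _ => by ring
    rw [h3]
    have h4 : ∀ j ∈ Icc 2 (J - 1), v j * ∑ i ∈ Icc 1 (J - 1), cA J i j * (α i ω + ε i j ω)
        = v j * A j ω - v j * β := fun j hj => by
      rw [show ∑ i ∈ Icc 1 (J - 1), cA J i j * (α i ω + ε i j ω) = A j ω - β from by
        rw [Aj_dec J hJ μc β θ α ε Y hY A hA j hj ω]; ring]
      ring
    rw [Finset.sum_congr rfl h4, Finset.sum_sub_distrib, ← Finset.sum_mul, hvsum, one_mul]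
    ring
  -- ENS decomposition
  have hEdec : ∀ ω, βENS ω = β + ∑ x ∈ Sfin J, ((a x + b x) / 2) * Zf x ω := by
    intro ω
    rw [hENS, hNdec, hCOdec]
    have : ∑ x ∈ Sfin J, ((a x + b x) / 2) * Zf x ω
        = (1/2) * ∑ x ∈ Sfin J, a x * Zf x ω + (1/2) * ∑ x ∈ Sfin J, b x * Zf x ω := by
      rw [Finset.mul_sum, Finset.mul_sum, ← Finset.sum_add_distrib]
      exact Finset.sum_congr rfl fun x _ => by ring
    rw [this]
    ring
  -- variances
  have VN : variance βNPWP ℙ = ∑ x ∈ Sfin J, (a x) ^ 2 * variance (Zf x) ℙ := by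
    rw [show βNPWP = fun ω => β + ∑ x ∈ Sfin J, a x * Zf x ω from funext hNdec]
    exact key_var J α ε hindep hL2α hL2ε a β
  have VC : variance βCO ℙ = ∑ x ∈ Sfin J, (b x) ^ 2 * variance (Zf x) ℙ := by
    rw [show βCO = fun ω => β + ∑ x ∈ Sfin J, b x * Zf x ω from funext hCOdec]
    exact key_var J α ε hindep hL2α hL2ε b β
  have VE : variance βENS ℙ = ∑ x ∈ Sfin J, ((a x + b x) / 2) ^ 2 * variance (Zf x) ℙ := by
    rw [show βENS = fun ω => β + ∑ x ∈ Sfin J, ((a x + b x) / 2) * Zf x ω from funext hEdec]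
    exact key_var J α ε hindep hL2α hL2ε (fun x => (a x + b x) / 2) β
  -- the strict comparison
  have hmain : ∑ x ∈ Sfin J, ((a x + b x) / 2) ^ 2 * variance (Zf x) ℙ
      < ∑ x ∈ Sfin J, ((a x) ^ 2 / 2 + (b x) ^ 2 / 2) * variance (Zf x) ℙ := by
    apply Finset.sum_lt_sum
    · intro x _
      have hV : 0 ≤ variance (Zf x) ℙ := variance_nonneg _ _
      have hq : ((a x + b x) / 2) ^ 2 ≤ (a x) ^ 2 / 2 + (b x) ^ 2 / 2 := by
        nlinarith [sq_nonneg (a x - b x)]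
      exact mul_le_mul_of_nonneg_right hq hV
    · refine ⟨Sum.inr (1, 1), ?_, ?_⟩
      · rw [mem_Sfin_iff]
        refine ⟨fun i h => by simp at h, fun i j h => ?_⟩
        injection h with h2
        injection h2 with h3 h4
        subst h3
        subst h4
        constructor <;> (simp only [Finset.mem_Icc]; omega)
      · have ha11 : a (Sum.inr (1, 1)) = 0 := by
          simp only [hadef, Sum.elim_inr]
          rw [if_neg (by simp only [Finset.mem_Icc]; omega)]
        have hb11 : b (Sum.inr (1, 1)) = -(w 2) := by
          simp only [hbdef, Sum.elim_inr]
          rw [Finset.sum_congr rfl (fun k hk => by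
            rw [Finset.mem_Icc] at hk
            by_cases hk2 : k = 2
            · subst hk2
              rw [show cB J 1 1 2 = -1 from by simp [cB]]
              rw [if_pos rfl]
              ring
            · rw [show cB J 1 1 k = 0 from by
                simp [cB, show ¬ ((1:ℕ) = k) by omega, show ¬ ((1:ℕ) = k - 1) by omega]]
              rw [if_neg hk2]
              ring : ∀ k ∈ Icc 2 (J - 1), w k * cB J 1 1 k
                = if k = 2 then -(w k) else 0)]
          rw [Finset.sum_ite_eq' (Icc 2 (J - 1)) 2,
            if_pos (by simp only [Finset.mem_Icc]; omega)]
        have hV11 : variance (Zf (Sum.inr (1, 1))) ℙ = σ2 := by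
          have h1 : (1:ℕ) ∈ Icc 1 (J - 1) := by simp only [Finset.mem_Icc]; omega
          have h2 : (1:ℕ) ∈ Icc 1 J := by simp only [Finset.mem_Icc]; omega
          simp only [hZdef, Sum.elim_inr]
          rw [hVε 1 h1 1 h2, hσ 1 h1 1 h2]
        rw [ha11, hb11, hV11]
        have hw2 : 0 < w 2 := hw0 2 (by simp only [Finset.mem_Icc]; omega)
        nlinarith [mul_pos (mul_pos hw2 hw2) hσ2pos]
  have hsum_eq : ∑ x ∈ Sfin J, ((a x) ^ 2 / 2 + (b x) ^ 2 / 2) * variance (Zf x) ℙ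
      = (∑ x ∈ Sfin J, (a x) ^ 2 * variance (Zf x) ℙ) / 2
        + (∑ x ∈ Sfin J, (b x) ^ 2 * variance (Zf x) ℙ) / 2 := by
    rw [Finset.sum_div, Finset.sum_div, ← Finset.sum_add_distrib]
    exact Finset.sum_congr rfl fun x _ => by ring
  have hfin : variance βENS ℙ < variance βCO ℙ := by
    rw [VE, VC]
    calc ∑ x ∈ Sfin J, ((a x + b x) / 2) ^ 2 * variance (Zf x) ℙ
        < ∑ x ∈ Sfin J, ((a x) ^ 2 / 2 + (b x) ^ 2 / 2) * variance (Zf x) ℙ := hmain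
      _ = (∑ x ∈ Sfin J, (a x) ^ 2 * variance (Zf x) ℙ) / 2
          + (∑ x ∈ Sfin J, (b x) ^ 2 * variance (Zf x) ℙ) / 2 := hsum_eq
      _ = ∑ x ∈ Sfin J, (b x) ^ 2 * variance (Zf x) ℙ := by
          rw [← VN, ← VC, hvar]; ring
  exact ⟨by rw [hvar]; exact hfin, hfin⟩
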